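/- Let $\{F^{(1)}_\mu\}$ and $\{F^{(2)}_\nu\}$ be Hermitian orthonormal bases of $M_{d_1}(\mathbb{C})$ and $M_{d_2}(\mathbb{C})$ respectively, and let $\Phi, \Psi$ be $d_1 \times d_2$ complex matrices. Fix an index $k$. Then $\big|\mathrm{Tr}\big(F^{(2)}_k (\Psi^\dagger \Phi)^T\big)\big|^2 \le \sum_\mu \big|\mathrm{Tr}\big(F^{(1)}_\mu \Phi\Psi^\dagger\big)\big|^2 + \sum_{\nu \ne k} \big|\mathrm{Tr}\big(F^{(2)}_\nu (\Psi^\dagger \Phi)^T\big)\big|^2$. -/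

import Mathlib

open Matrix

lemma sum_sq_trace {d : ℕ} (F : Fin (d ^ 2) → Matrix (Fin d) (Fin d) ℂ)
    (hherm : ∀ μ, (F μ).IsHermitian)
    (honb : ∀ μ μ', ((F μ)ᴴ * F μ').trace = if μ = μ' then 1 else 0)
    (A : Matrix (Fin d) (Fin d) ℂ) :
    ∑ μ, ((F μ * A).trace) ^ 2 = (A * A).trace := by
  have key : ∀ (g : Fin (d ^ 2) → ℂ) (i),
      ((F i)ᴴ * (∑ j, g j • F j)).trace = g i := by
    intro g i
    rw [Finset.mul_sum, trace_sum]
    simp only [Matrix.mul_smul, trace_smul, honb, smul_eq_mul, mul_ite, mul_one, mul_zero]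
    simp
  have li : LinearIndependent ℂ F := by
    rw [Fintype.linearIndependent_iff]
    intro g hg i
    have := key g i
    rw [hg] at this
    simpa using this.symm
  rcases Nat.eq_zero_or_pos d with hd | hd
  · subst hd
    simp [Matrix.trace]
  haveI : Nonempty (Fin (d ^ 2)) := ⟨⟨0, by positivity⟩⟩
  have hcard : Fintype.card (Fin (d ^ 2)) =
      Module.finrank ℂ (Matrix (Fin d) (Fin d) ℂ) := by
    simp [Module.finrank_matrix, sq]
  let b := basisOfLinearIndependentOfCardEqFinrank li hcard
  have hb : ⇑b = F := coe_basisOfLinearIndependentOfCardEqFinrank li hcard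
  have hA : A = ∑ μ, b.repr A μ • F μ := by
    conv_lhs => rw [← b.sum_repr A]
    simp [hb]
  set c : Fin (d ^ 2) → ℂ := fun μ => b.repr A μ with hc
  have htr : ∀ μ, (F μ * A).trace = c μ := by
    intro μ
    rw [← (hherm μ), hA]
    exact key c μ
  have htr2 : ∀ μ ν, (F μ * F ν).trace = if μ = ν then 1 else 0 := by
    intro μ ν; rw [← (hherm μ)]; exact honb μ ν
  calc ∑ μ, ((F μ * A).trace) ^ 2 = ∑ μ, c μ * c μ := by
        simp [htr, sq]
    _ = (A * A).trace := by
        conv_rhs => rw [hA]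
        rw [Finset.sum_mul_sum]
        simp only [Matrix.smul_mul, Matrix.mul_smul, trace_sum, trace_smul, htr2,
          smul_eq_mul]
        simp [Finset.sum_ite_eq, mul_ite]
        rfl

theorem triangle_trace_inequality (d1 d2 : ℕ)
    (F1 : Fin (d1 ^ 2) → Matrix (Fin d1) (Fin d1) ℂ)
    (F2 : Fin (d2 ^ 2) → Matrix (Fin d2) (Fin d2) ℂ)
    (h1herm : ∀ μ, (F1 μ).IsHermitian)
    (h2herm : ∀ ν, (F2 ν).IsHermitian)
    (h1onb : ∀ μ μ', ((F1 μ)ᴴ * F1 μ').trace = if μ = μ' then 1 else 0)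
    (h2onb : ∀ ν ν', ((F2 ν)ᴴ * F2 ν').trace = if ν = ν' then 1 else 0)
    (Φ Ψ : Matrix (Fin d1) (Fin d2) ℂ) (k : Fin (d2 ^ 2)) :
    ‖(F2 k * (Ψᴴ * Φ)ᵀ).trace‖ ^ 2
      ≤ ∑ μ, ‖(F1 μ * (Φ * Ψᴴ)).trace‖ ^ 2
        + ∑ ν ∈ Finset.univ.erase k, ‖(F2 ν * (Ψᴴ * Φ)ᵀ).trace‖ ^ 2 := by
  set A := Φ * Ψᴴ with hA
  set B := (Ψᴴ * Φ)ᵀ with hB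
  have h1 := sum_sq_trace F1 h1herm h1onb A
  have h2 := sum_sq_trace F2 h2herm h2onb B
  have hBB : (B * B).trace = (A * A).trace := by
    rw [hB, hA, ← transpose_mul, trace_transpose, Matrix.mul_assoc, trace_mul_comm]
    simp [Matrix.mul_assoc]
  have hsum : ∑ μ, ((F1 μ * A).trace) ^ 2 = ∑ ν, ((F2 ν * B).trace) ^ 2 := by
    rw [h1, h2, hBB]
  have hsplit : ∑ ν, ((F2 ν * B).trace) ^ 2
      = ((F2 k * B).trace) ^ 2 + ∑ ν ∈ Finset.univ.erase k, ((F2 ν * B).trace) ^ 2 :=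
    (Finset.add_sum_erase _ _ (Finset.mem_univ k)).symm
  have hk : ((F2 k * B).trace) ^ 2
      = (∑ μ, ((F1 μ * A).trace) ^ 2)
        - ∑ ν ∈ Finset.univ.erase k, ((F2 ν * B).trace) ^ 2 := by
    rw [hsum, hsplit]; ring
  calc ‖(F2 k * B).trace‖ ^ 2 = ‖((F2 k * B).trace) ^ 2‖ := by
        rw [norm_pow]
    _ ≤ ‖∑ μ, ((F1 μ * A).trace) ^ 2‖
        + ‖∑ ν ∈ Finset.univ.erase k, ((F2 ν * B).trace) ^ 2‖ := by
        rw [hk]; exact norm_sub_le _ _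
    _ ≤ ∑ μ, ‖(F1 μ * A).trace‖ ^ 2
        + ∑ ν ∈ Finset.univ.erase k, ‖(F2 ν * B).trace‖ ^ 2 := by
        gcongr <;>
          refine le_trans (norm_sum_le _ _) (le_of_eq ?_) <;>
          simp [norm_pow]
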